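/- (Theorem 3, quadratic convergence of exact DPO-Mix-R.) Suppose θ^(0) = 0 and the parameters evolve by the exact DPO-Mix-R update with learning rate η = 1/(β²A): θ^(t+1)_a = θ^(t)_a + (1/(βA)) Σ_{a'∈𝒴} Δ(a,a';θ^(t)) / σ'(r(a) − r(a')) for every a ∈ 𝒴. Then for every number of iterations T ∈ ℕ and all a, a' ∈ 𝒴, |δ(a,a';θ^(T))| ≤ 0.5^(2^T − 1). -/

import Mathlib

/-- The sigmoid function. -/
noncomputable def sig (x : ℝ) : ℝ := 1 / (1 + Real.exp (-x))

/-- The derivative of the sigmoid function. -/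
noncomputable def sig' (x : ℝ) : ℝ := sig x * (1 - sig x)

lemma one_add_exp_pos (x : ℝ) : 0 < 1 + Real.exp (-x) := by positivity

lemma sig_pos (x : ℝ) : 0 < sig x := by unfold sig; positivity

lemma sig_lt_one (x : ℝ) : sig x < 1 := by
  unfold sig
  rw [div_lt_one (one_add_exp_pos x)]
  linarith [Real.exp_pos (-x)]

lemma sig'_pos (x : ℝ) : 0 < sig' x := by
  have h1 := sig_pos x; have h2 := sig_lt_one x
  unfold sig'; nlinarith

lemma hasDerivAt_sig (x : ℝ) : HasDerivAt sig (sig' x) x := by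
  have h1 : HasDerivAt (fun y : ℝ => 1 + Real.exp (-y)) (-Real.exp (-x)) x := by
    simpa using (((Real.hasDerivAt_exp (-x)).comp x ((hasDerivAt_id x).neg)).const_add 1)
  have h2 := h1.inv (ne_of_gt (one_add_exp_pos x))
  have heq : sig' x = -(-Real.exp (-x)) / (1 + Real.exp (-x)) ^ 2 := by
    have hne := (one_add_exp_pos x).ne'
    simp only [sig', sig]
    field_simp
    ring
  rw [heq, show sig = fun y : ℝ => (1 + Real.exp (-y))⁻¹ from funext fun y => by simp [sig, one_div]]
  exact h2

lemma hasDerivAt_sig' (x : ℝ) : HasDerivAt sig' (sig' x * (1 - 2 * sig x)) x := by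
  have h := (hasDerivAt_sig x).mul ((hasDerivAt_const x (1:ℝ)).sub (hasDerivAt_sig x))
  have heq : sig' x * (1 - sig x) + sig x * (0 - sig' x) = sig' x * (1 - 2 * sig x) := by
    unfold sig'; ring
  rw [← heq]
  exact h

lemma abs_sig'' (x : ℝ) : |sig' x * (1 - 2 * sig x)| ≤ 31 / 320 := by
  set s := sig x with hs
  have h1 : 0 < s := sig_pos x
  have h2 : s < 1 := sig_lt_one x
  have hw : 0 ≤ s * (1 - s) := by nlinarith
  have key : (sig' x * (1 - 2 * sig x)) ^ 2 ≤ (31 / 320) ^ 2 := by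
    have expand : (sig' x * (1 - 2 * sig x)) ^ 2
        = (s * (1 - s)) ^ 2 * (1 - 4 * (s * (1 - s))) := by
      simp only [sig', ← hs]; ring
    rw [expand]
    nlinarith [mul_nonneg hw (sq_nonneg (s * (1 - s) - 1 / 6)), sq_nonneg (s * (1 - s) - 1 / 6)]
  calc |sig' x * (1 - 2 * sig x)| = Real.sqrt ((sig' x * (1 - 2 * sig x)) ^ 2) := by
        rw [Real.sqrt_sq_eq_abs]
    _ ≤ Real.sqrt ((31 / 320) ^ 2) := Real.sqrt_le_sqrt key
    _ = 31 / 320 := by rw [Real.sqrt_sq]; norm_num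

lemma sig'_lip (x y : ℝ) : |sig' x - sig' y| ≤ 31 / 320 * |x - y| := by
  have h := Convex.norm_image_sub_le_of_norm_hasDerivWithin_le
    (f := sig') (f' := fun t => sig' t * (1 - 2 * sig t)) (s := Set.univ)
    (fun t _ => (hasDerivAt_sig' t).hasDerivWithinAt)
    (fun t _ => by rw [Real.norm_eq_abs]; exact abs_sig'' t) convex_univ (Set.mem_univ y) (Set.mem_univ x)
  simpa [Real.norm_eq_abs] using h

lemma nonneg_of_deriv_sign (F F' : ℝ → ℝ) (hF : ∀ t, HasDerivAt F (F' t) t)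
    (h0 : F 0 = 0) (hpos : ∀ t, 0 ≤ t → 0 ≤ F' t) (hneg : ∀ t, t ≤ 0 → F' t ≤ 0)
    (d : ℝ) : 0 ≤ F d := by
  have hd : ∀ t, deriv F t = F' t := fun t => (hF t).deriv
  have hcont : Continuous F :=
    continuous_iff_continuousAt.mpr fun t => (hF t).continuousAt
  rcases le_total 0 d with h | h
  · have hm : MonotoneOn F (Set.Icc 0 d) :=
      monotoneOn_of_deriv_nonneg (convex_Icc 0 d) hcont.continuousOn
        (fun t _ => (hF t).differentiableAt.differentiableWithinAt)
        (fun t ht => by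
          rw [hd]
          have ht' : t ∈ Set.Ioo (0:ℝ) d := by rwa [interior_Icc] at ht
          exact hpos t ht'.1.le)
    have h2 := hm (Set.left_mem_Icc.mpr h) (Set.right_mem_Icc.mpr h) h
    rwa [h0] at h2
  · have hm : AntitoneOn F (Set.Icc d 0) :=
      antitoneOn_of_deriv_nonpos (convex_Icc d 0) hcont.continuousOn
        (fun t _ => (hF t).differentiableAt.differentiableWithinAt)
        (fun t ht => by
          rw [hd]
          have ht' : t ∈ Set.Ioo d (0:ℝ) := by rwa [interior_Icc] at ht
          exact hneg t ht'.2.le)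
    have h2 := hm (Set.left_mem_Icc.mpr h) (Set.right_mem_Icc.mpr h) h
    rwa [h0] at h2

lemma taylor_bound (x d : ℝ) : |sig x - sig (x - d) - sig' x * d| ≤ 31 / 640 * d ^ 2 := by
  set g : ℝ → ℝ := fun t => sig x - sig (x - t) - sig' x * t with hg
  have hg' : ∀ t, HasDerivAt g (sig' (x - t) - sig' x) t := by
    intro t
    have h1 : HasDerivAt (fun t : ℝ => sig (x - t)) (-sig' (x - t)) t := by
      have := (hasDerivAt_sig (x - t)).comp t ((hasDerivAt_const t x).sub (hasDerivAt_id t))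
      simp at this; exact this
    have h2 : HasDerivAt (fun t : ℝ => sig' x * t) (sig' x) t := by
      simpa using (hasDerivAt_id t).const_mul (sig' x)
    have := ((hasDerivAt_const t (sig x)).sub h1).sub h2
    exact this.congr_deriv (by ring)
  have hlip : ∀ t : ℝ, |sig' (x - t) - sig' x| ≤ 31 / 320 * |t| := by
    intro t
    have := sig'_lip (x - t) x
    simpa using this
  have hsq : ∀ t : ℝ, HasDerivAt (fun t : ℝ => 31 / 640 * t ^ 2) (31 / 320 * t) t := by
    intro t
    have := (hasDerivAt_pow 2 t).const_mul (31 / 640 : ℝ)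
    exact this.congr_deriv (by simp; ring)
  have hF : 0 ≤ 31 / 640 * d ^ 2 - g d := by
    refine nonneg_of_deriv_sign (fun t => 31 / 640 * t ^ 2 - g t)
      (fun t => 31 / 320 * t - (sig' (x - t) - sig' x))
      (fun t => (hsq t).sub (hg' t)) (by simp [hg]) ?_ ?_ d
    · intro t ht
      have h := hlip t
      rw [abs_of_nonneg ht] at h
      have := abs_le.mp h
      linarith [this.2]
    · intro t ht
      have h := hlip t
      rw [abs_of_nonpos ht] at h
      have := abs_le.mp h
      linarith [this.1]
  have hG : 0 ≤ 31 / 640 * d ^ 2 + g d := by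
    refine nonneg_of_deriv_sign (fun t => 31 / 640 * t ^ 2 + g t)
      (fun t => 31 / 320 * t + (sig' (x - t) - sig' x))
      (fun t => (hsq t).add (hg' t)) (by simp [hg]) ?_ ?_ d
    · intro t ht
      have h := hlip t
      rw [abs_of_nonneg ht] at h
      have := abs_le.mp h
      linarith [this.1]
    · intro t ht
      have h := hlip t
      rw [abs_of_nonpos ht] at h
      have := abs_le.mp h
      linarith [this.2]
  have hgd : g d = sig x - sig (x - d) - sig' x * d := rfl
  rw [← hgd]
  exact abs_le.mpr ⟨by linarith, by linarith⟩

lemma sig'_lower {x : ℝ} (hx : |x| ≤ 1) : (31 / 160 : ℝ) ≤ sig' x := by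
  obtain ⟨hx1, hx2⟩ := abs_le.mp hx
  set u := Real.exp (-x) with hu
  have hupos : 0 < u := Real.exp_pos _
  have he1 : Real.exp 1 < 2.7182818286 := Real.exp_one_lt_d9
  have huh : u ≤ 2.7182818286 := by
    calc u ≤ Real.exp 1 := Real.exp_le_exp.mpr (by linarith)
      _ ≤ 2.7182818286 := he1.le
  have hul : (0.36 : ℝ) ≤ u := by
    have h1 : Real.exp (-1) ≤ u := Real.exp_le_exp.mpr (by linarith)
    have h2 : (0.36 : ℝ) ≤ Real.exp (-1) := by
      rw [Real.exp_neg]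
      rw [le_inv_comm₀ (by norm_num) (Real.exp_pos 1)]
      calc Real.exp 1 ≤ 2.7182818286 := he1.le
        _ ≤ (0.36 : ℝ)⁻¹ := by norm_num
    linarith
  have hne : (1 : ℝ) + u ≠ 0 := by positivity
  have hsig : sig' x = u / (1 + u) ^ 2 := by
    have h1 : 1 - 1 / (1 + u) = u / (1 + u) := by field_simp; ring
    simp only [sig', sig, ← hu, h1, div_mul_div_comm, one_mul, sq]
  rw [hsig, le_div_iff₀ (by positivity)]
  nlinarith [mul_nonneg (sub_nonneg.mpr hul) (sub_nonneg.mpr huh)]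

/-- **Theorem 3 (Upper bound of DPO-Mix-R).**
Under tabular softmax parametrization with uniform reference policy,
rewards in `[0,1]`, initialization `θ⁰ = 0`, and the exact DPO-Mix-R
update with learning rate `η = 1/(β²A)`, the reward-gap errors converge
quadratically: `|δ(a,a';θ^T)| ≤ 0.5^(2^T - 1)`. -/
theorem dpo_mix_r_quadratic_convergence
    {Y : Type*} [Fintype Y] [Nonempty Y]
    (A : ℕ) (hA : A = Fintype.card Y)
    (r : Y → ℝ) (hr : ∀ a, 0 ≤ r a ∧ r a ≤ 1)
    (β : ℝ) (hβ : 0 < β)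
    (θ : ℕ → Y → ℝ) (hθ0 : θ 0 = 0)
    (hupd : ∀ t a, θ (t + 1) a = θ t a +
      (1 / (β * A)) * ∑ a' : Y,
        (sig (r a - r a') - sig (β * (θ t a - θ t a'))) / sig' (r a - r a')) :
    ∀ (T : ℕ) (a a' : Y),
      |r a - r a' - β * (θ T a - θ T a')| ≤ (0.5 : ℝ) ^ (2 ^ T - 1) := by
  have hApos : (0 : ℝ) < (A : ℝ) := by
    rw [hA]
    exact_mod_cast Fintype.card_pos
  intro T
  induction T with
  | zero =>
    intro a a'
    rw [hθ0]
    simp only [Pi.zero_apply, sub_zero, mul_zero, pow_zero]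
    norm_num
    obtain ⟨h1, h2⟩ := hr a
    obtain ⟨h3, h4⟩ := hr a'
    exact abs_le.mpr ⟨by linarith, by linarith⟩
  | succ T ih =>
    intro a a'
    set M : ℝ := (0.5 : ℝ) ^ (2 ^ T - 1) with hM
    have hMnn : 0 ≤ M := by positivity
    -- error of the Newton-like step for each pair
    have he : ∀ b c : Y,
        |(sig (r b - r c) - sig (β * (θ T b - θ T c))) / sig' (r b - r c)
          - (r b - r c - β * (θ T b - θ T c))| ≤ M ^ 2 / 4 := by
      intro b c
      set x := r b - r c with hx
      set d := r b - r c - β * (θ T b - θ T c) with hd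
      have hxb : |x| ≤ 1 := by
        obtain ⟨h1, h2⟩ := hr b
        obtain ⟨h3, h4⟩ := hr c
        exact abs_le.mpr ⟨by simp [hx]; linarith, by simp [hx]; linarith⟩
      have hlow : (31 / 160 : ℝ) ≤ sig' x := sig'_lower hxb
      have hpos : 0 < sig' x := sig'_pos x
      have hbd : β * (θ T b - θ T c) = x - d := by rw [hx, hd]; ring
      rw [hbd]
      have hrw : (sig x - sig (x - d)) / sig' x - d
          = (sig x - sig (x - d) - sig' x * d) / sig' x := by
        field_simp
      rw [hrw, abs_div, abs_of_pos hpos, div_le_iff₀ hpos]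
      have htay := taylor_bound x d
      have hdM : |d| ≤ M := ih b c
      have hd2 : d ^ 2 ≤ M ^ 2 := by
        have := sq_abs d
        nlinarith [abs_nonneg d]
      calc |sig x - sig (x - d) - sig' x * d| ≤ 31 / 640 * d ^ 2 := htay
        _ ≤ 31 / 640 * M ^ 2 := mul_le_mul_of_nonneg_left hd2 (by norm_num)
        _ = M ^ 2 / 4 * (31 / 160) := by ring
        _ ≤ M ^ 2 / 4 * sig' x := mul_le_mul_of_nonneg_left hlow (by positivity)
    -- the update in terms of β θ
    set f : Y → Y → ℝ := fun b c =>
      (sig (r b - r c) - sig (β * (θ T b - θ T c))) / sig' (r b - r c) with hf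
    set D : Y → Y → ℝ := fun b c => r b - r c - β * (θ T b - θ T c) with hD
    have hsum : ∀ b : Y, β * θ (T + 1) b = β * θ T b + (1 / A) * ∑ c : Y, f b c := by
      intro b
      rw [hupd T b]
      field_simp
      ring
    have hDconst : ∀ c : Y, D a c - D a' c = D a a' := by
      intro c
      simp only [hD]
      ring
    have hsplit : ∑ c : Y, (f a c - f a' c)
        = (∑ c : Y, ((f a c - D a c) - (f a' c - D a' c))) + A * D a a' := by
      have h1 : ∑ c : Y, (f a c - f a' c)
          = (∑ c : Y, ((f a c - D a c) - (f a' c - D a' c))) + ∑ c : Y, (D a c - D a' c) := by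
        rw [← Finset.sum_add_distrib]
        apply Finset.sum_congr rfl
        intro c _
        ring
      rw [h1]
      congr 1
      rw [Finset.sum_congr rfl (fun c _ => hDconst c), Finset.sum_const, Finset.card_univ,
        ← hA, nsmul_eq_mul]
    have key : r a - r a' - β * (θ (T + 1) a - θ (T + 1) a')
        = -(1 / A) * ∑ c : Y, ((f a c - D a c) - (f a' c - D a' c)) := by
      have h1 := hsum a
      have h2 := hsum a'
      have hexp : r a - r a' - β * (θ (T + 1) a - θ (T + 1) a')
          = D a a' - (1 / A) * ∑ c : Y, (f a c - f a' c) := by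
        have : β * (θ (T + 1) a - θ (T + 1) a')
            = β * θ T a - β * θ T a' + (1 / A) * ∑ c : Y, (f a c - f a' c) := by
          rw [mul_sub, h1, h2, Finset.sum_sub_distrib]
          ring
        rw [this]
        simp only [hD]
        ring
      rw [hexp, hsplit]
      field_simp
      ring
    rw [key]
    have hsumbd : |∑ c : Y, ((f a c - D a c) - (f a' c - D a' c))| ≤ A * (M ^ 2 / 2) := by
      calc |∑ c : Y, ((f a c - D a c) - (f a' c - D a' c))|
          ≤ ∑ c : Y, |(f a c - D a c) - (f a' c - D a' c)| :=
            Finset.abs_sum_le_sum_abs _ _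
        _ ≤ ∑ _c : Y, (M ^ 2 / 2) := by
            apply Finset.sum_le_sum
            intro c _
            calc |(f a c - D a c) - (f a' c - D a' c)|
                ≤ |f a c - D a c| + |f a' c - D a' c| := abs_sub _ _
              _ ≤ M ^ 2 / 4 + M ^ 2 / 4 := add_le_add (he a c) (he a' c)
              _ = M ^ 2 / 2 := by ring
        _ = A * (M ^ 2 / 2) := by
            rw [Finset.sum_const, Finset.card_univ, ← hA, nsmul_eq_mul]
    have habs : |(-(1 / (A : ℝ))) * ∑ c : Y, ((f a c - D a c) - (f a' c - D a' c))|
        ≤ M ^ 2 / 2 := by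
      rw [abs_mul, abs_neg, abs_of_pos (by positivity : (0:ℝ) < 1 / (A:ℝ))]
      calc 1 / (A : ℝ) * |∑ c : Y, ((f a c - D a c) - (f a' c - D a' c))|
          ≤ 1 / (A : ℝ) * (A * (M ^ 2 / 2)) := by
            apply mul_le_mul_of_nonneg_left hsumbd (by positivity)
        _ = M ^ 2 / 2 := by field_simp
    have hpow : (0.5 : ℝ) ^ (2 ^ (T + 1) - 1) = M ^ 2 / 2 := by
      have h1 : 2 ^ (T + 1) - 1 = (2 ^ T - 1) + (2 ^ T - 1) + 1 := by
        have := Nat.one_le_two_pow (n := T)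
        omega
      rw [h1, pow_add, pow_add, hM]
      norm_num
      ring
    rw [hpow]
    exact habs
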